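/- (Absolute convergence of the band-transition double series.) Let H be a complex Hilbert space, (v_n)_{n∈ℕ} an orthonormal family in H, and λ : ℕ → [0,∞) a sequence such that Σ_n (1+λ_n)^{−s} < ∞ for every s > 1. Let (w_n)_{n∈ℕ} be vectors of H satisfying: (i) ‖w_n‖ ≤ M (1+λ_n)^{1/2} for all n, for some M > 0, and (ii) ⟨w_n, v_m⟩ = −conj(⟨w_m, v_n⟩) for all n, m. Let z ∈ ℂ and c > 0 be such that |z − λ_n| ≥ c (1+λ_n) for every n. Then the double family ( (n,m) ↦ |⟨w_m, v_n⟩|² / ( |z − λ_n| · |z − λ_m|² ) ) is summable over ℕ × ℕ. -/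

import Mathlib

set_option maxHeartbeats 1000000 in
/-- (Absolute convergence of the band-transition double series.)
`H` a complex Hilbert space, `(v_n)` orthonormal, `λ_n ≥ 0` with `Σ (1+λ_n)^{−s} < ∞`
for all `s > 1`, `‖w_n‖ ≤ M (1+λ_n)^{1/2}`, `⟨w_n, v_m⟩ = −conj ⟨w_m, v_n⟩`, and
`|z − λ_n| ≥ c (1+λ_n)`.  Then `(n,m) ↦ |⟨w_m, v_n⟩|² / (|z−λ_n|·|z−λ_m|²)` is summable. -/
theorem band_transition_double_series_summable
    {H : Type*} [NormedAddCommGroup H] [InnerProductSpace ℂ H]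
    (v : ℕ → H) (hv : Orthonormal ℂ v)
    (lam : ℕ → ℝ) (hlam : ∀ n, 0 ≤ lam n)
    (hsum : ∀ s : ℝ, 1 < s → Summable fun n => (1 + lam n) ^ (-s))
    (w : ℕ → H) (M : ℝ) (hM : 0 < M)
    (hw : ∀ n, ‖w n‖ ≤ M * Real.sqrt (1 + lam n))
    (hanti : ∀ n m, (inner ℂ (w n) (v m) : ℂ) = -(starRingEnd ℂ) (inner ℂ (w m) (v n) : ℂ))
    (z : ℂ) (c : ℝ) (hc : 0 < c)
    (hz : ∀ n, c * (1 + lam n) ≤ ‖z - (lam n : ℂ)‖) :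
    Summable fun p : ℕ × ℕ =>
      ‖(inner ℂ (w p.2) (v p.1) : ℂ)‖ ^ 2 /
        (‖z - (lam p.1 : ℂ)‖ * ‖z - (lam p.2 : ℂ)‖ ^ 2) := by
  set b : ℕ → ℝ := fun k => 1 + lam k with hb_def
  have hw' : ∀ n, ‖w n‖ ≤ M * Real.sqrt (b n) := hw
  have hz' : ∀ n, c * b n ≤ ‖z - (lam n : ℂ)‖ := hz
  have hsum' : ∀ s : ℝ, 1 < s → Summable fun n => (b n) ^ (-s) := hsum
  have hb1 : ∀ k, (1:ℝ) ≤ b k := fun k => by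
    simp only [hb_def]; linarith [hlam k]
  have hbpos : ∀ k, (0:ℝ) < b k := fun k => lt_of_lt_of_le one_pos (hb1 k)
  -- an opaque square root of M
  obtain ⟨N, hN, hNM⟩ : ∃ N : ℝ, 0 < N ∧ N ^ 2 = M :=
    ⟨Real.sqrt M, Real.sqrt_pos.mpr hM, Real.sq_sqrt hM.le⟩
  -- an opaque fourth root of b
  obtain ⟨s4, hs41, hb4, h9, h6, h5, hsqrt⟩ :
      ∃ s4 : ℕ → ℝ, (∀ k, (1:ℝ) ≤ s4 k) ∧ (∀ k, b k = s4 k ^ 4) ∧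
        (∀ k, (b k) ^ (-(9/4) : ℝ) = (s4 k ^ 9)⁻¹) ∧
        (∀ k, (b k) ^ (-(3/2) : ℝ) = (s4 k ^ 6)⁻¹) ∧
        (∀ k, (b k) ^ (-(5/4) : ℝ) = (s4 k ^ 5)⁻¹) ∧
        (∀ k, Real.sqrt (b k) = s4 k ^ 2) := by
    refine ⟨fun k => (b k) ^ ((1:ℝ)/4), ?_, ?_, ?_, ?_, ?_, ?_⟩
    · exact fun k => Real.one_le_rpow (hb1 k) (by norm_num)
    all_goals intro k
    all_goals rw [← Real.rpow_natCast ((b k) ^ ((1:ℝ)/4)) _, ← Real.rpow_mul (hbpos k).le]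
    · norm_num
    · rw [show (-(9/4):ℝ) = -(1/4*(9:ℕ)) by norm_num, Real.rpow_neg (hbpos k).le]
    · rw [show (-(3/2):ℝ) = -(1/4*(6:ℕ)) by norm_num, Real.rpow_neg (hbpos k).le]
    · rw [show (-(5/4):ℝ) = -(1/4*(5:ℕ)) by norm_num, Real.rpow_neg (hbpos k).le]
    · rw [Real.sqrt_eq_rpow]; norm_num
  have hs4pos : ∀ k, (0:ℝ) < s4 k := fun k => lt_of_lt_of_le one_pos (hs41 k)
  clear_value b
  -- abstract matrix elements
  obtain ⟨a, ha0, haeq, hbound, hbound', hbes, htsum⟩ :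
      ∃ a : ℕ → ℕ → ℝ, (∀ m n, 0 ≤ a m n) ∧
        (∀ m n, a m n = ‖(inner ℂ (w m) (v n) : ℂ)‖) ∧
        (∀ n m, a m n ≤ N ^ 2 * s4 m ^ 2) ∧
        (∀ n m, a m n ≤ N ^ 2 * s4 n ^ 2) ∧
        (∀ m, Summable fun n => a m n ^ 2) ∧
        (∀ m, ∑' n, a m n ^ 2 ≤ N ^ 4 * s4 m ^ 4) := by
    have hsymm : ∀ n m, ‖(inner ℂ (w m) (v n) : ℂ)‖ = ‖(inner ℂ (w n) (v m) : ℂ)‖ := by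
      intro n m
      rw [hanti n m, norm_neg, RCLike.norm_conj]
    have hbound : ∀ n m, ‖(inner ℂ (w m) (v n) : ℂ)‖ ≤ N ^ 2 * s4 m ^ 2 := by
      intro n m
      calc ‖(inner ℂ (w m) (v n) : ℂ)‖ ≤ ‖w m‖ * ‖v n‖ := norm_inner_le_norm _ _
        _ = ‖w m‖ := by rw [hv.1 n, mul_one]
        _ ≤ M * Real.sqrt (b m) := hw' m
        _ = N ^ 2 * s4 m ^ 2 := by rw [hNM, hsqrt]
    refine ⟨fun m n => ‖(inner ℂ (w m) (v n) : ℂ)‖, fun m n => norm_nonneg _,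
      fun m n => rfl, hbound, ?_, ?_, ?_⟩
    · intro n m
      dsimp only
      rw [hsymm n m]; exact hbound m n
    · intro m
      have := hv.inner_products_summable (x := w m)
      exact this.congr fun n => by rw [norm_inner_symm]
    · intro m
      dsimp only
      have h1 : ∑' n, ‖(inner ℂ (w m) (v n) : ℂ)‖ ^ 2
          = ∑' n, ‖(inner ℂ (v n) (w m) : ℂ)‖ ^ 2 := by
        congr 1; funext n; rw [norm_inner_symm]
      rw [h1]
      calc ∑' n, ‖(inner ℂ (v n) (w m) : ℂ)‖ ^ 2 ≤ ‖w m‖ ^ 2 :=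
            hv.tsum_inner_products_le (w m)
        _ ≤ (M * Real.sqrt (b m)) ^ 2 := by
            have h2 := hw' m
            have h0 : (0:ℝ) ≤ ‖w m‖ := norm_nonneg _
            nlinarith
        _ = N ^ 4 * s4 m ^ 4 := by rw [hsqrt, ← hNM]; ring
  -- summability of the dominating function
  have hGsummable : Summable fun p : ℕ × ℕ =>
      N ^ 3 / (2 * c ^ 3) * (a p.2 p.1 ^ 2 * (b p.2) ^ (-(9/4) : ℝ))
      + N / (2 * c ^ 3) * ((b p.1) ^ (-(3/2) : ℝ) * (b p.2) ^ (-(5/4) : ℝ)) := by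
    apply Summable.add
    · apply Summable.mul_left
      have hF : Summable fun q : ℕ × ℕ =>
          a q.1 q.2 ^ 2 * (b q.1) ^ (-(9/4) : ℝ) := by
        rw [summable_prod_of_nonneg
          (fun q => mul_nonneg (by positivity) (Real.rpow_nonneg (hbpos _).le _))]
        constructor
        · intro m
          exact (hbes m).mul_right ((b m) ^ (-(9/4) : ℝ))
        · have key : ∀ m : ℕ, ∑' n, a m n ^ 2 * (b m) ^ (-(9/4) : ℝ)
              ≤ N ^ 4 * (b m) ^ (-(5/4) : ℝ) := by
            intro m
            rw [tsum_mul_right]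
            calc (∑' n, a m n ^ 2) * (b m) ^ (-(9/4) : ℝ)
                ≤ (N ^ 4 * s4 m ^ 4) * (b m) ^ (-(9/4) : ℝ) :=
                  mul_le_mul_of_nonneg_right (htsum m) (Real.rpow_nonneg (hbpos m).le _)
              _ = N ^ 4 * (b m) ^ (-(5/4) : ℝ) := by
                  rw [h9, h5]
                  have hs : s4 m ≠ 0 := (hs4pos m).ne'
                  field_simp
          apply Summable.of_nonneg_of_le (fun m => ?_) key
            ((hsum' (5/4) (by norm_num)).mul_left _)
          exact tsum_nonneg fun n =>
            mul_nonneg (by positivity) (Real.rpow_nonneg (hbpos m).le _)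
      exact hF.prod_symm
    · apply Summable.mul_left
      exact (hsum' (3/2) (by norm_num)).mul_of_nonneg (hsum' (5/4) (by norm_num))
        (fun n => Real.rpow_nonneg (hbpos n).le _) (fun n => Real.rpow_nonneg (hbpos n).le _)
  -- the purely real pointwise estimate
  have main : ∀ u A B x y : ℝ, 0 ≤ u → u ≤ N ^ 2 * x ^ 2 → u ≤ N ^ 2 * y ^ 2 →
      1 ≤ x → 1 ≤ y → c * x ^ 4 ≤ A → c * y ^ 4 ≤ B →
      u ^ 2 / (A * B ^ 2) ≤
        N ^ 3 / (2 * c ^ 3) * (u ^ 2 * (y ^ 9)⁻¹) + N / (2 * c ^ 3) * ((x ^ 6)⁻¹ * (y ^ 5)⁻¹) := by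
    intro u A B x y hu0 hux huy hx1 hy1 hA hB
    have hx0 : (0:ℝ) < x := lt_of_lt_of_le one_pos hx1
    have hy0 : (0:ℝ) < y := lt_of_lt_of_le one_pos hy1
    have hApos : 0 < A := lt_of_lt_of_le (mul_pos hc (pow_pos hx0 4)) hA
    have hBpos : 0 < B := lt_of_lt_of_le (mul_pos hc (pow_pos hy0 4)) hB
    have step1 : u ^ 2 / (A * B ^ 2) ≤ u ^ 2 / (c ^ 3 * x ^ 4 * y ^ 8) := by
      apply div_le_div_of_nonneg_left (by positivity)
        (mul_pos (mul_pos (pow_pos hc 3) (pow_pos hx0 4)) (pow_pos hy0 8))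
      calc c ^ 3 * x ^ 4 * y ^ 8 = (c * x ^ 4) * (c * y ^ 4) ^ 2 := by ring
        _ ≤ A * B ^ 2 :=
            mul_le_mul hA (pow_le_pow_left₀ (mul_pos hc (pow_pos hy0 4)).le hB 2)
              (pow_nonneg (mul_pos hc (pow_pos hy0 4)).le 2) hApos.le
    refine step1.trans ?_
    have huxy : u ≤ N ^ 2 * x * y := by
      have h2 : u ^ 2 ≤ (N ^ 2 * x * y) ^ 2 := by nlinarith
      nlinarith [h2, mul_pos (mul_pos (pow_pos hN 2) hx0) hy0]
    have hP : 2 * (u ^ 2 * x ^ 2 * y) ≤ N ^ 3 * u ^ 2 * x ^ 6 + N * y ^ 4 := by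
      have am : 2 * (N * u * x ^ 3 * y ^ 2) ≤ N ^ 2 * u ^ 2 * x ^ 6 + y ^ 4 := by
        nlinarith [sq_nonneg (N * u * x ^ 3 - y ^ 2)]
      have am2 : N * (2 * (N * u * x ^ 3 * y ^ 2)) ≤ N * (N ^ 2 * u ^ 2 * x ^ 6 + y ^ 4) :=
        mul_le_mul_of_nonneg_left am hN.le
      have step : u ^ 2 * x ^ 2 * y ≤ N ^ 2 * u * x ^ 3 * y ^ 2 := by
        nlinarith [mul_le_mul_of_nonneg_right huxy
          (mul_nonneg (mul_nonneg hu0 (pow_pos hx0 2).le) hy0.le)]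
      nlinarith [am2, step]
    have hRHS : N ^ 3 / (2 * c ^ 3) * (u ^ 2 * (y ^ 9)⁻¹) + N / (2 * c ^ 3) * ((x ^ 6)⁻¹ * (y ^ 5)⁻¹)
        = (N ^ 3 * u ^ 2 * x ^ 6 + N * y ^ 4) / (2 * c ^ 3 * x ^ 6 * y ^ 9) := by
      field_simp
    rw [hRHS, div_le_div_iff₀
      (mul_pos (mul_pos (pow_pos hc 3) (pow_pos hx0 4)) (pow_pos hy0 8))
      (mul_pos (mul_pos (mul_pos two_pos (pow_pos hc 3)) (pow_pos hx0 6)) (pow_pos hy0 9))]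
    calc u ^ 2 * (2 * c ^ 3 * x ^ 6 * y ^ 9)
        = (2 * (u ^ 2 * x ^ 2 * y)) * (c ^ 3 * x ^ 4 * y ^ 8) := by ring
      _ ≤ (N ^ 3 * u ^ 2 * x ^ 6 + N * y ^ 4) * (c ^ 3 * x ^ 4 * y ^ 8) :=
          mul_le_mul_of_nonneg_right hP
            (mul_nonneg (mul_nonneg (pow_pos hc 3).le (pow_pos hx0 4).le) (pow_pos hy0 8).le)
  -- comparison, for the abstracted matrix elements
  have hmain : Summable fun p : ℕ × ℕ =>
      a p.2 p.1 ^ 2 /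
        (‖z - (lam p.1 : ℂ)‖ * ‖z - (lam p.2 : ℂ)‖ ^ 2) := by
    apply Summable.of_nonneg_of_le (fun p => ?_) (fun p => ?_) hGsummable
    · exact div_nonneg (by positivity)
        (mul_nonneg (norm_nonneg _) (pow_nonneg (norm_nonneg _) 2))
    · obtain ⟨n, m⟩ := p
      dsimp only
      rw [h9, h6, h5]
      have hA : c * s4 n ^ 4 ≤ ‖z - (lam n : ℂ)‖ := by
        rw [← hb4]; exact hz' n
      have hB : c * s4 m ^ 4 ≤ ‖z - (lam m : ℂ)‖ := by
        rw [← hb4]; exact hz' m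
      exact main _ _ _ _ _ (ha0 m n) (hbound' n m) (hbound n m) (hs41 n) (hs41 m) hA hB
  exact hmain.congr fun p => by rw [haeq]
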